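/- Suppose f : [a,b]×[c,d] → ℝ (with a<b, c<d) is convex on the co-ordinates on [a,b]×[c,d] and integrable. Then the following chain of inequalities holds: f((a+b)/2, (c+d)/2) ≤ (1/2)[ (1/(b−a)) ∫_a^b f(x,(c+d)/2) dx + (1/(d−c)) ∫_c^d f((a+b)/2, y) dy ] ≤ (1/((b−a)(d−c))) ∫_a^b ∫_c^d f(x,y) dx dy ≤ (1/4)[ (1/(b−a)) ∫_a^b f(x,c) dx + (1/(b−a)) ∫_a^b f(x,d) dx + (1/(d−c)) ∫_c^d f(a,y) dy + (1/(d−c)) ∫_c^d f(b,y) dy ] ≤ (f(a,c)+f(a,d)+f(b,c)+f(b,d))/4. -/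

import Mathlib

open MeasureTheory Set

/-- A convex function on `Icc a b` is integrable there. -/
lemma convexOn_integrableOn_Icc {a b : ℝ} (hab : a < b) {g : ℝ → ℝ}
    (hg : ConvexOn ℝ (Icc a b) g) : IntegrableOn g (Icc a b) := by
  have ha : a ∈ Icc a b := ⟨le_refl a, hab.le⟩
  have hb : b ∈ Icc a b := ⟨hab.le, le_refl b⟩
  set M := max (g a) (g b) with hM
  have hub : ∀ x ∈ Icc a b, g x ≤ M := by
    intro x hx
    exact hg.le_on_segment ha hb (by rwa [segment_eq_Icc hab.le])
  have hlb : ∀ x ∈ Icc a b, 2 * g ((a + b) / 2) - M ≤ g x := by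
    intro x hx
    have hx' : a + b - x ∈ Icc a b := ⟨by linarith [hx.2], by linarith [hx.1]⟩
    have h2 := hg.2 hx hx' (by norm_num : (0:ℝ) ≤ 1/2) (by norm_num : (0:ℝ) ≤ 1/2)
      (by norm_num)
    have hcmb : (1/2 : ℝ) • x + (1/2 : ℝ) • (a + b - x) = (a + b) / 2 := by
      simp only [smul_eq_mul]; ring
    rw [hcmb] at h2
    have := hub _ hx'
    simp only [smul_eq_mul] at h2
    linarith
  have hbd : ∀ x ∈ Icc a b, |g x| ≤ |M| + |2 * g ((a + b) / 2) - M| := by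
    intro x hx
    have h1 := hub x hx
    have h2 := hlb x hx
    rw [abs_le]
    constructor
    · nlinarith [neg_abs_le (2 * g ((a + b) / 2) - M), abs_nonneg M]
    · nlinarith [le_abs_self M, abs_nonneg (2 * g ((a + b) / 2) - M)]
  have hmeas : AEStronglyMeasurable g (volume.restrict (Icc a b)) := by
    have hco : ContinuousOn g (Ioo a b) := by
      have := hg.continuousOn_interior
      rwa [interior_Icc] at this
    have h1 : AEStronglyMeasurable g (volume.restrict (Ioo a b)) :=
      hco.aestronglyMeasurable measurableSet_Ioo
    rwa [Measure.restrict_congr_set Ioo_ae_eq_Icc] at h1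
  refine Integrable.mono' (g := fun _ => |M| + |2 * g ((a + b) / 2) - M|) ?_ hmeas ?_
  · exact integrableOn_const measure_Icc_lt_top.ne
  · filter_upwards [ae_restrict_mem measurableSet_Icc] with x hx
    exact hbd x hx

lemma intervalIntegrable_of_integrableOn_Icc {a b : ℝ} (hab : a ≤ b) {g : ℝ → ℝ}
    (h : IntegrableOn g (Icc a b)) : IntervalIntegrable g volume a b :=
  (intervalIntegrable_iff_integrableOn_Icc_of_le hab).2 h

/-- Left Hermite–Hadamard inequality. -/
lemma hh_left {a b : ℝ} (hab : a < b) {g : ℝ → ℝ} (hg : ConvexOn ℝ (Icc a b) g)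
    (hi : IntegrableOn g (Icc a b)) :
    g ((a + b) / 2) * (b - a) ≤ ∫ x in a..b, g x := by
  set m := (a + b) / 2 with hm
  set h := (b - a) / 2 with hh
  have hh0 : 0 ≤ h := by rw [hh]; linarith
  have hmb : m + h = b := by rw [hm, hh]; ring
  have ham : m - h = a := by rw [hm, hh]; ring
  have ham' : a ≤ m := by rw [hm]; linarith
  have hmb' : m ≤ b := by rw [hm]; linarith
  have hii : IntervalIntegrable g volume a b := intervalIntegrable_of_integrableOn_Icc hab.le hi
  have hiam : IntervalIntegrable g volume a m :=
    hii.mono_set (by rw [uIcc_of_le ham', uIcc_of_le hab.le]; exact Icc_subset_Icc le_rfl hmb')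
  have himb : IntervalIntegrable g volume m b :=
    hii.mono_set (by rw [uIcc_of_le hmb', uIcc_of_le hab.le]; exact Icc_subset_Icc ham' le_rfl)
  have i1 : IntervalIntegrable (fun t => g (m + t)) volume 0 h := by
    have := himb.comp_add_left m
    simpa [show m - m = (0:ℝ) by ring, show b - m = h by rw [← hmb]; ring] using this
  have i2 : IntervalIntegrable (fun t => g (m - t)) volume 0 h := by
    have := hiam.comp_sub_left m
    have h1 : m - a = h := by rw [← ham]; ring
    have h2 : m - m = (0:ℝ) := by ring
    rw [h2, h1] at this
    exact this.symm
  have e1 : (∫ t in (0:ℝ)..h, g (m + t)) = ∫ x in m..b, g x := by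
    rw [intervalIntegral.integral_comp_add_left g m, add_zero, hmb]
  have e2 : (∫ t in (0:ℝ)..h, g (m - t)) = ∫ x in a..m, g x := by
    rw [intervalIntegral.integral_comp_sub_left g m, sub_zero, ham]
  have hsplit : (∫ x in a..b, g x) = (∫ x in a..m, g x) + ∫ x in m..b, g x :=
    (intervalIntegral.integral_add_adjacent_intervals hiam himb).symm
  have key : (∫ _t in (0:ℝ)..h, (2 : ℝ) * g m) ≤ ∫ t in (0:ℝ)..h, (g (m - t) + g (m + t)) := by
    apply intervalIntegral.integral_mono_on hh0 intervalIntegrable_const (i2.add i1)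
    intro t ht
    obtain ⟨ht0, hth⟩ := ht
    have h1 : m - t ∈ Icc a b := ⟨by linarith [ham], by linarith⟩
    have h2 : m + t ∈ Icc a b := ⟨by linarith, by linarith [hmb]⟩
    have hc := hg.2 h1 h2 (by norm_num : (0:ℝ) ≤ 1/2) (by norm_num : (0:ℝ) ≤ 1/2) (by norm_num)
    have hcmb : (1/2 : ℝ) • (m - t) + (1/2 : ℝ) • (m + t) = m := by
      simp only [smul_eq_mul]; ring
    rw [hcmb] at hc
    simp only [smul_eq_mul] at hc
    linarith
  have hconst : (∫ _t in (0:ℝ)..h, (2 : ℝ) * g m) = 2 * g m * h := by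
    simp; ring
  have hadd : (∫ t in (0:ℝ)..h, (g (m - t) + g (m + t)))
      = (∫ t in (0:ℝ)..h, g (m - t)) + ∫ t in (0:ℝ)..h, g (m + t) :=
    intervalIntegral.integral_add i2 i1
  rw [hconst, hadd, e1, e2, ← hsplit] at key
  have : g m * (b - a) = 2 * g m * h := by rw [hh]; ring
  linarith

/-- Right Hermite–Hadamard inequality. -/
lemma hh_right {a b : ℝ} (hab : a < b) {g : ℝ → ℝ} (hg : ConvexOn ℝ (Icc a b) g)
    (hi : IntegrableOn g (Icc a b)) :
    (∫ x in a..b, g x) ≤ (g a + g b) / 2 * (b - a) := by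
  have hba : (0:ℝ) < b - a := by linarith
  have ha : a ∈ Icc a b := ⟨le_refl a, hab.le⟩
  have hb : b ∈ Icc a b := ⟨hab.le, le_refl b⟩
  set p := (g b - g a) / (b - a) with hp
  set q := (g a * b - g b * a) / (b - a) with hq
  have hii : IntervalIntegrable g volume a b := intervalIntegrable_of_integrableOn_Icc hab.le hi
  have hlin : IntervalIntegrable (fun x => p * x + q) volume a b :=
    (Continuous.intervalIntegrable (by continuity) a b)
  have hpt : ∀ x ∈ Icc a b, g x ≤ p * x + q := by
    intro x hx
    obtain ⟨hax, hxb⟩ := hx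
    have hu0 : (0:ℝ) ≤ (b - x) / (b - a) := div_nonneg (by linarith) (by linarith)
    have hv0 : (0:ℝ) ≤ (x - a) / (b - a) := div_nonneg (by linarith) (by linarith)
    have huv : (b - x) / (b - a) + (x - a) / (b - a) = 1 := by field_simp; ring
    have hc := hg.2 ha hb hu0 hv0 huv
    have hcmb : ((b - x) / (b - a)) • a + ((x - a) / (b - a)) • b = x := by
      simp only [smul_eq_mul]; field_simp; ring
    rw [hcmb] at hc
    simp only [smul_eq_mul] at hc
    calc g x ≤ (b - x) / (b - a) * g a + (x - a) / (b - a) * g b := hc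
      _ = p * x + q := by rw [hp, hq]; field_simp; ring
  have hmono : (∫ x in a..b, g x) ≤ ∫ x in a..b, (p * x + q) :=
    intervalIntegral.integral_mono_on hab.le hii hlin hpt
  have hF : ∀ x : ℝ, HasDerivAt (fun y => p / 2 * y ^ 2 + q * y) (p * x + q) x := by
    intro x
    have h1 : HasDerivAt (fun y : ℝ => y ^ 2) (2 * x) x := by
      simpa using hasDerivAt_pow 2 x
    have h2 : HasDerivAt (fun y : ℝ => p / 2 * y ^ 2) (p / 2 * (2 * x)) x := h1.const_mul _
    have h3 : HasDerivAt (fun y : ℝ => q * y) q x := by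
      simpa using (hasDerivAt_id x).const_mul q
    have := h2.add h3
    exact this.congr_deriv (by ring)
  have hcalc : (∫ x in a..b, (p * x + q))
      = (p / 2 * b ^ 2 + q * b) - (p / 2 * a ^ 2 + q * a) :=
    intervalIntegral.integral_eq_sub_of_hasDerivAt (fun x _ => hF x) hlin
  have hval : (p / 2 * b ^ 2 + q * b) - (p / 2 * a ^ 2 + q * a) = (g a + g b) / 2 * (b - a) := by
    rw [hp, hq]; field_simp; ring
  rw [hcalc, hval] at hmono
  exact hmono

set_option maxHeartbeats 800000 in
theorem hadamard_coord_chain (a b c d : ℝ) (hab : a < b) (hcd : c < d)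
    (f : ℝ → ℝ → ℝ)
    (hconvY : ∀ y₀ ∈ Set.Icc c d, ConvexOn ℝ (Set.Icc a b) (fun u => f u y₀))
    (hconvX : ∀ x₀ ∈ Set.Icc a b, ConvexOn ℝ (Set.Icc c d) (fun v => f x₀ v))
    (hint : MeasureTheory.IntegrableOn (fun p : ℝ × ℝ => f p.1 p.2) (Set.Icc a b ×ˢ Set.Icc c d)) :
    f ((a+b)/2) ((c+d)/2)
      ≤ (1/2) * (1/(b-a) * (∫ x in a..b, f x ((c+d)/2)) + 1/(d-c) * (∫ y in c..d, f ((a+b)/2) y))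
    ∧ (1/2) * (1/(b-a) * (∫ x in a..b, f x ((c+d)/2)) + 1/(d-c) * (∫ y in c..d, f ((a+b)/2) y))
      ≤ 1/((b-a)*(d-c)) * (∫ x in a..b, ∫ y in c..d, f x y)
    ∧ 1/((b-a)*(d-c)) * (∫ x in a..b, ∫ y in c..d, f x y)
      ≤ (1/4) * (1/(b-a) * (∫ x in a..b, f x c) + 1/(b-a) * (∫ x in a..b, f x d)
          + 1/(d-c) * (∫ y in c..d, f a y) + 1/(d-c) * (∫ y in c..d, f b y))
    ∧ (1/4) * (1/(b-a) * (∫ x in a..b, f x c) + 1/(b-a) * (∫ x in a..b, f x d)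
          + 1/(d-c) * (∫ y in c..d, f a y) + 1/(d-c) * (∫ y in c..d, f b y))
      ≤ (f a c + f a d + f b c + f b d)/4 := by
  have hba : (0:ℝ) < b - a := by linarith
  have hdc : (0:ℝ) < d - c := by linarith
  have hm₁ : (a + b) / 2 ∈ Icc a b := ⟨by linarith, by linarith⟩
  have hm₂ : (c + d) / 2 ∈ Icc c d := ⟨by linarith, by linarith⟩
  have hac : a ∈ Icc a b := ⟨le_refl a, hab.le⟩
  have hbc : b ∈ Icc a b := ⟨hab.le, le_refl b⟩
  have hcc : c ∈ Icc c d := ⟨le_refl c, hcd.le⟩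
  have hdd : d ∈ Icc c d := ⟨hcd.le, le_refl d⟩
  set μ := volume.restrict (Icc a b) with hμ
  set ν := volume.restrict (Icc c d) with hν
  have hprod : Integrable (fun p : ℝ × ℝ => f p.1 p.2) (μ.prod ν) := by
    rw [hμ, hν, Measure.prod_restrict, ← Measure.volume_eq_prod]
    exact hint
  have cvX : ∀ g : ℝ → ℝ, (∫ x in a..b, g x) = ∫ x, g x ∂μ := by
    intro g
    rw [intervalIntegral.integral_of_le hab.le, hμ, ← integral_Icc_eq_integral_Ioc]
  have cvY : ∀ g : ℝ → ℝ, (∫ y in c..d, g y) = ∫ y, g y ∂ν := by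
    intro g
    rw [intervalIntegral.integral_of_le hcd.le, hν, ← integral_Icc_eq_integral_Ioc]
  -- integrability of slice functions
  have hintX : ∀ y₀ ∈ Icc c d, IntervalIntegrable (fun x => f x y₀) volume a b := fun y₀ hy₀ =>
    intervalIntegrable_of_integrableOn_Icc hab.le (convexOn_integrableOn_Icc hab (hconvY y₀ hy₀))
  have hintY : ∀ x₀ ∈ Icc a b, IntervalIntegrable (fun y => f x₀ y) volume c d := fun x₀ hx₀ =>
    intervalIntegrable_of_integrableOn_Icc hcd.le (convexOn_integrableOn_Icc hcd (hconvX x₀ hx₀))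
  -- integrability of partial integrals
  have hIx : IntervalIntegrable (fun x => ∫ y in c..d, f x y) volume a b := by
    have h1 : Integrable (fun x => ∫ y, f x y ∂ν) μ := hprod.integral_prod_left
    have h2 : (fun x => ∫ y in c..d, f x y) = fun x => ∫ y, f x y ∂ν :=
      funext fun x => cvY (f x)
    rw [h2]
    exact intervalIntegrable_of_integrableOn_Icc hab.le h1
  have hIy : IntervalIntegrable (fun y => ∫ x in a..b, f x y) volume c d := by
    have h1 : Integrable (fun y => ∫ x, f x y ∂μ) ν := hprod.integral_prod_right
    have h2 : (fun y => ∫ x in a..b, f x y) = fun y => ∫ x, f x y ∂μ :=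
      funext fun y => cvX (fun x => f x y)
    rw [h2]
    exact intervalIntegrable_of_integrableOn_Icc hcd.le h1
  -- Fubini
  have JF : (∫ y in c..d, ∫ x in a..b, f x y) = ∫ x in a..b, ∫ y in c..d, f x y := by
    rw [cvY (fun y => ∫ x in a..b, f x y), cvX (fun x => ∫ y in c..d, f x y)]
    simp_rw [cvX, cvY]
    exact (integral_integral_swap hprod).symm
  -- abbreviations
  set IXm := ∫ x in a..b, f x ((c+d)/2) with hIXm
  set IYm := ∫ y in c..d, f ((a+b)/2) y with hIYm
  set J := ∫ x in a..b, ∫ y in c..d, f x y with hJ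
  set IXc := ∫ x in a..b, f x c with hIXc
  set IXd := ∫ x in a..b, f x d with hIXd
  set IYa := ∫ y in c..d, f a y with hIYa
  set IYb := ∫ y in c..d, f b y with hIYb
  -- basic 1D inequalities
  have L1 : f ((a+b)/2) ((c+d)/2) * (b - a) ≤ IXm :=
    hh_left hab (hconvY _ hm₂) (convexOn_integrableOn_Icc hab (hconvY _ hm₂))
  have L2 : f ((a+b)/2) ((c+d)/2) * (d - c) ≤ IYm :=
    hh_left hcd (hconvX _ hm₁) (convexOn_integrableOn_Icc hcd (hconvX _ hm₁))
  have R1 : IXc ≤ (f a c + f b c) / 2 * (b - a) :=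
    hh_right hab (hconvY _ hcc) (convexOn_integrableOn_Icc hab (hconvY _ hcc))
  have R2 : IXd ≤ (f a d + f b d) / 2 * (b - a) :=
    hh_right hab (hconvY _ hdd) (convexOn_integrableOn_Icc hab (hconvY _ hdd))
  have R3 : IYa ≤ (f a c + f a d) / 2 * (d - c) :=
    hh_right hcd (hconvX _ hac) (convexOn_integrableOn_Icc hcd (hconvX _ hac))
  have R4 : IYb ≤ (f b c + f b d) / 2 * (d - c) :=
    hh_right hcd (hconvX _ hbc) (convexOn_integrableOn_Icc hcd (hconvX _ hbc))
  -- middle inequalities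
  have M1 : IXm * (d - c) ≤ J := by
    have hmono : (∫ x in a..b, f x ((c+d)/2) * (d - c)) ≤ ∫ x in a..b, ∫ y in c..d, f x y := by
      apply intervalIntegral.integral_mono_on hab.le ((hintX _ hm₂).mul_const _) hIx
      intro x hx
      exact hh_left hcd (hconvX x hx) (convexOn_integrableOn_Icc hcd (hconvX x hx))
    rwa [intervalIntegral.integral_mul_const] at hmono
  have M2 : IYm * (b - a) ≤ J := by
    have hmono : (∫ y in c..d, f ((a+b)/2) y * (b - a)) ≤ ∫ y in c..d, ∫ x in a..b, f x y := by
      apply intervalIntegral.integral_mono_on hcd.le ((hintY _ hm₁).mul_const _) hIy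
      intro y hy
      exact hh_left hab (hconvY y hy) (convexOn_integrableOn_Icc hab (hconvY y hy))
    rw [intervalIntegral.integral_mul_const, JF] at hmono
    exact hmono
  have M3 : J ≤ (IXc + IXd) / 2 * (d - c) := by
    have hmono : (∫ x in a..b, ∫ y in c..d, f x y)
        ≤ ∫ x in a..b, (f x c + f x d) / 2 * (d - c) := by
      apply intervalIntegral.integral_mono_on hab.le hIx
        ((((hintX _ hcc).add (hintX _ hdd)).div_const 2).mul_const _)
      intro x hx
      exact hh_right hcd (hconvX x hx) (convexOn_integrableOn_Icc hcd (hconvX x hx))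
    have hcalc : (∫ x in a..b, (f x c + f x d) / 2 * (d - c)) = (IXc + IXd) / 2 * (d - c) := by
      rw [intervalIntegral.integral_mul_const, intervalIntegral.integral_div,
        intervalIntegral.integral_add (hintX _ hcc) (hintX _ hdd)]
    rwa [hcalc] at hmono
  have M4 : J ≤ (IYa + IYb) / 2 * (b - a) := by
    have hmono : (∫ y in c..d, ∫ x in a..b, f x y)
        ≤ ∫ y in c..d, (f a y + f b y) / 2 * (b - a) := by
      apply intervalIntegral.integral_mono_on hcd.le hIy
        ((((hintY _ hac).add (hintY _ hbc)).div_const 2).mul_const _)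
      intro y hy
      exact hh_right hab (hconvY y hy) (convexOn_integrableOn_Icc hab (hconvY y hy))
    have hcalc : (∫ y in c..d, (f a y + f b y) / 2 * (b - a)) = (IYa + IYb) / 2 * (b - a) := by
      rw [intervalIntegral.integral_mul_const, intervalIntegral.integral_div,
        intervalIntegral.integral_add (hintY _ hac) (hintY _ hbc)]
    rw [JF] at hmono
    rwa [hcalc] at hmono
  -- assemble
  have hbd : (0:ℝ) < (b - a) * (d - c) := mul_pos hba hdc
  refine ⟨?_, ?_, ?_, ?_⟩
  · have C1 : f ((a+b)/2) ((c+d)/2) ≤ IXm / (b - a) := (le_div_iff₀ hba).2 L1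
    have C2 : f ((a+b)/2) ((c+d)/2) ≤ IYm / (d - c) := (le_div_iff₀ hdc).2 L2
    have e1 : 1/(b-a) * IXm = IXm / (b-a) := one_div_mul_eq_div _ _
    have e2 : 1/(d-c) * IYm = IYm / (d-c) := one_div_mul_eq_div _ _
    rw [e1, e2]
    linarith
  · have P1 : IXm / (b - a) ≤ J / ((b - a) * (d - c)) := by
      rw [div_le_div_iff₀ hba hbd]
      linarith [mul_le_mul_of_nonneg_right M1 hba.le]
    have P2 : IYm / (d - c) ≤ J / ((b - a) * (d - c)) := by
      rw [div_le_div_iff₀ hdc hbd]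
      linarith [mul_le_mul_of_nonneg_right M2 hdc.le]
    have e1 : 1/(b-a) * IXm = IXm / (b-a) := one_div_mul_eq_div _ _
    have e2 : 1/(d-c) * IYm = IYm / (d-c) := one_div_mul_eq_div _ _
    have e3 : 1/((b-a)*(d-c)) * J = J / ((b-a)*(d-c)) := one_div_mul_eq_div _ _
    rw [e1, e2, e3]
    linarith
  · have P3 : J / ((b - a) * (d - c)) ≤ (IXc + IXd) / 2 / (b - a) := by
      rw [div_le_div_iff₀ hbd hba]
      linarith [mul_le_mul_of_nonneg_right M3 hba.le]
    have P4 : J / ((b - a) * (d - c)) ≤ (IYa + IYb) / 2 / (d - c) := by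
      rw [div_le_div_iff₀ hbd hdc]
      linarith [mul_le_mul_of_nonneg_right M4 hdc.le]
    have e1 : 1/(b-a) * IXc = IXc / (b-a) := one_div_mul_eq_div _ _
    have e2 : 1/(b-a) * IXd = IXd / (b-a) := one_div_mul_eq_div _ _
    have e3 : 1/(d-c) * IYa = IYa / (d-c) := one_div_mul_eq_div _ _
    have e4 : 1/(d-c) * IYb = IYb / (d-c) := one_div_mul_eq_div _ _
    have e5 : 1/((b-a)*(d-c)) * J = J / ((b-a)*(d-c)) := one_div_mul_eq_div _ _
    have e6 : (IXc + IXd) / 2 / (b - a) = IXc / (b - a) / 2 + IXd / (b - a) / 2 := by ring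
    have e7 : (IYa + IYb) / 2 / (d - c) = IYa / (d - c) / 2 + IYb / (d - c) / 2 := by ring
    rw [e1, e2, e3, e4, e5]
    linarith [P3, P4, e6, e7]
  · have Q1 : IXc / (b - a) ≤ (f a c + f b c) / 2 := (div_le_iff₀ hba).2 R1
    have Q2 : IXd / (b - a) ≤ (f a d + f b d) / 2 := (div_le_iff₀ hba).2 R2
    have Q3 : IYa / (d - c) ≤ (f a c + f a d) / 2 := (div_le_iff₀ hdc).2 R3
    have Q4 : IYb / (d - c) ≤ (f b c + f b d) / 2 := (div_le_iff₀ hdc).2 R4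
    have e1 : 1/(b-a) * IXc = IXc / (b-a) := one_div_mul_eq_div _ _
    have e2 : 1/(b-a) * IXd = IXd / (b-a) := one_div_mul_eq_div _ _
    have e3 : 1/(d-c) * IYa = IYa / (d-c) := one_div_mul_eq_div _ _
    have e4 : 1/(d-c) * IYb = IYb / (d-c) := one_div_mul_eq_div _ _
    rw [e1, e2, e3, e4]
    linarith
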